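/- arXiv:2302.10814 — 3 statements merged into one kernel-verified Lean document; each statement's English description precedes it below -/
import Mathlib

section
/- For every noncrossing partition λ of size n, Q_λ is the Bruhat-maximum element of the excedance class C_λ: Q_λ ∈ C_λ and w ≤ Q_λ in the Bruhat order for every w ∈ C_λ. -/
open scoped Classical

noncomputable section

/-- `IsNCP n A` : `A` is the arc set of a noncrossing partition of size `n`
(arcs `(i,j)` with `i < j`; no two distinct arcs `(i,k)`, `(j,l)` with `i ≤ j < k ≤ l`,
i.e. no crossings and no shared endpoints). -/
def IsNCP (n : ℕ) (A : Finset (Fin n × Fin n)) : Prop :=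
  (∀ p ∈ A, p.1 < p.2) ∧
    ∀ p ∈ A, ∀ q ∈ A, p ≠ q → ¬(p.1 ≤ q.1 ∧ q.1 < p.2 ∧ p.2 ≤ q.2)

/-- Noncrossing partitions of size `n` (labelled `1, …, n`, realized as `Fin n`). -/
def NCP (n : ℕ) : Type := {A : Finset (Fin n × Fin n) // IsNCP n A}

noncomputable instance (n : ℕ) : Fintype (NCP n) := by
  unfold NCP; infer_instance

namespace NCP

variable {n : ℕ}

/-- The set `λ⁺` of left endpoints of arcs. -/
def lpos (lam : NCP n) : Finset (Fin n) := lam.1.image Prod.fst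

/-- The set `λ⁻` of right endpoints of arcs. -/
def rpos (lam : NCP n) : Finset (Fin n) := lam.1.image Prod.snd

/-- `a` and `b` lie in the same connected component of `λ` viewed as a graph. -/
def Connected (lam : NCP n) (a b : Fin n) : Prop :=
  Relation.ReflTransGen (fun x y => (x, y) ∈ lam.1 ∨ (y, x) ∈ lam.1) a b

/-- The connected component of `j` in `λ`. -/
def component (lam : NCP n) (j : Fin n) : Finset (Fin n) :=
  Finset.univ.filter fun i => Connected lam j i

theorem mem_component_self (lam : NCP n) (j : Fin n) : j ∈ component lam j :=
  Finset.mem_filter.mpr ⟨Finset.mem_univ j, Relation.ReflTransGen.refl⟩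

/-- The largest element of the connected component of `j` in `λ`. -/
def compMax (lam : NCP n) (j : Fin n) : Fin n :=
  (component lam j).max' ⟨j, mem_component_self lam j⟩

/-- The function underlying the permutation `Q_λ` : `j ↦ i` if `(i,j)` is an arc of `λ`,
and `j ↦` the largest element of the connected component of `j` otherwise. -/
def Qfun (lam : NCP n) (j : Fin n) : Fin n :=
  if h : ∃ i, (i, j) ∈ lam.1 then h.choose else compMax lam j

/-- `Q` is the permutation `Q_λ`. -/
def IsQ (lam : NCP n) (Q : Equiv.Perm (Fin n)) : Prop :=
  ∀ j, Q j = Qfun lam j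

/-- `T` is the permutation `T_λ` : the bijection mapping `λ⁻` onto `λ⁺` in an
order-preserving way and the complement of `λ⁻` onto the complement of `λ⁺` in an
order-preserving way. -/
def IsT (lam : NCP n) (T : Equiv.Perm (Fin n)) : Prop :=
  (∀ j, j ∈ rpos lam ↔ T j ∈ lpos lam) ∧
  (∀ j j', j ∈ rpos lam → j' ∈ rpos lam → j < j' → T j < T j') ∧
  (∀ j j', j ∉ rpos lam → j' ∉ rpos lam → j < j' → T j < T j')

end NCP

/-- Weak excedance positions `E_pos(w) = {i : i ≤ w(i)}`. -/
def ExcPos {n : ℕ} (w : Equiv.Perm (Fin n)) : Finset (Fin n) :=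
  Finset.univ.filter fun i => i ≤ w i

/-- Weak excedance values `E_val(w) = {w(i) : i ≤ w(i)}`. -/
def ExcVal {n : ℕ} (w : Equiv.Perm (Fin n)) : Finset (Fin n) :=
  (ExcPos w).image w

/-- The excedance relation `∼`. -/
def ExcEq {n : ℕ} (v w : Equiv.Perm (Fin n)) : Prop :=
  ExcVal v = ExcVal w ∧ ExcPos v = ExcPos w

/-- The excedance relation as a setoid on `S_n`. -/
def excSetoid (n : ℕ) : Setoid (Equiv.Perm (Fin n)) where
  r := ExcEq
  iseqv := ⟨fun _ => ⟨rfl, rfl⟩, fun h => ⟨h.1.symm, h.2.symm⟩,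
    fun h h' => ⟨h.1.trans h'.1, h.2.trans h'.2⟩⟩

namespace NCP

/-- The excedance class `C_λ`. -/
def Cset {n : ℕ} (lam : NCP n) : Set (Equiv.Perm (Fin n)) :=
  {w | ExcVal w = Finset.univ \ lpos lam ∧ ExcPos w = Finset.univ \ rpos lam}

end NCP

/-- Number of inversions of a permutation. -/
def bruhatLen {n : ℕ} (w : Equiv.Perm (Fin n)) : ℕ :=
  (Finset.univ.filter fun p : Fin n × Fin n => p.1 < p.2 ∧ w p.2 < w p.1).card

/-- The Bruhat order on `S_n` : generated by `v < w` whenever `w v⁻¹` is a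
transposition and `ℓ(v) < ℓ(w)`. -/
def BruhatLE {n : ℕ} (v w : Equiv.Perm (Fin n)) : Prop :=
  Relation.ReflTransGen (fun a b => (b * a⁻¹).IsSwap ∧ bruhatLen a < bruhatLen b) v w

/-- Strict Bruhat order. -/
def BruhatLT {n : ℕ} (v w : Equiv.Perm (Fin n)) : Prop :=
  BruhatLE v w ∧ v ≠ w

/-- `λ` is covered by `μ` : `λ` is obtained from `μ` by removing an arc `(i, i+1)`,
or by replacing an arc `(i,k)` by two arcs `(i,j)`, `(j,k)` with `i < j < k`
(validity of the result is enforced by `λ` being a noncrossing partition). -/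
def NCPCovBy {n : ℕ} (lam mu : NCP n) : Prop :=
  (∃ i j : Fin n, (j : ℕ) = (i : ℕ) + 1 ∧ (i, j) ∈ mu.1 ∧ lam.1 = mu.1.erase (i, j)) ∨
  (∃ i j k : Fin n, i < j ∧ j < k ∧ (i, k) ∈ mu.1 ∧
      lam.1 = insert (i, j) (insert (j, k) (mu.1.erase (i, k))))

/-- The partial order `⪯` on noncrossing partitions generated by the covering relation. -/
def NCPle {n : ℕ} (lam mu : NCP n) : Prop :=
  Relation.ReflTransGen (fun a b => NCPCovBy a b) lam mu

/-- The defining relations of the Temperley–Lieb algebra `TL_n(2)`. -/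
inductive TLRel (n : ℕ) : FreeAlgebra ℂ (Fin (n - 1)) → FreeAlgebra ℂ (Fin (n - 1)) → Prop
  | sq (i : Fin (n - 1)) :
      TLRel n (FreeAlgebra.ι ℂ i * FreeAlgebra.ι ℂ i) (2 * FreeAlgebra.ι ℂ i)
  | far (i j : Fin (n - 1)) (h : (i : ℕ) + 1 < (j : ℕ) ∨ (j : ℕ) + 1 < (i : ℕ)) :
      TLRel n (FreeAlgebra.ι ℂ i * FreeAlgebra.ι ℂ j) (FreeAlgebra.ι ℂ j * FreeAlgebra.ι ℂ i)
  | near (i j : Fin (n - 1)) (h : (i : ℕ) + 1 = (j : ℕ) ∨ (j : ℕ) + 1 = (i : ℕ)) :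
      TLRel n (FreeAlgebra.ι ℂ i * FreeAlgebra.ι ℂ j * FreeAlgebra.ι ℂ i) (FreeAlgebra.ι ℂ i)

/-- The Temperley–Lieb algebra `TL_n(2)`. -/
abbrev TL (n : ℕ) := RingQuot (TLRel n)

/-- The generator `e_i` of `TL_n(2)`. -/
def TLgen (n : ℕ) (i : Fin (n - 1)) : TL n :=
  RingQuot.mkAlgHom ℂ (TLRel n) (FreeAlgebra.ι ℂ i)

/-- The simple transposition `s_i = (i, i+1)` in `S_n`. -/
def simpleTransposition (n : ℕ) (i : Fin (n - 1)) : Equiv.Perm (Fin n) :=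
  Equiv.swap ⟨i.val, lt_of_lt_of_le i.isLt (Nat.sub_le n 1)⟩
    ⟨i.val + 1, by have h := i.isLt; omega⟩

open MvPolynomial

/-- The monomial quasisymmetric polynomial `M_α` in `n` variables,
for a composition `α = (α 0, …, α (k-1))`. -/
noncomputable def Mpoly (n k : ℕ) (α : Fin k → ℕ) : MvPolynomial (Fin n) ℚ :=
  ∑ c ∈ Finset.univ.filter (fun c : Fin k → Fin n => StrictMono c),
    ∏ s : Fin k, X (c s) ^ α s

/-- The vanishing polynomial `P_α`.  The sum over pairs (a coarsening `β ⪰ α` with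
blocks witnessed by `1 = f_1 < ⋯ < f_{ℓ+1} = k+1`, and indices `i_1 < ⋯ < i_ℓ`)
is re-indexed by monotone maps `c : Fin k → Fin n`: the fibers of `c` are the blocks of
the coarsening, and `c` sends the `j`-th block to `i_j`.  The variable with 1-based label
`i` is `x_i`, so the rational constant attached to `c s : Fin n` is `(c s : ℕ) + 1`. -/
noncomputable def Ppoly (n k : ℕ) (α : Fin k → ℕ) : MvPolynomial (Fin n) ℚ :=
  ∑ c ∈ Finset.univ.filter (fun c : Fin k → Fin n => Monotone c),
    ∏ s : Fin k,
      if ∀ t, t < s → c t < c s then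
        X (c s) ^ α s - C ((((c s : ℕ) : ℚ) + 1) ^ α s)
      else C ((-(((c s : ℕ) : ℚ) + 1)) ^ α s)

/-- The top-degree homogeneous component `h(f)`. -/
noncomputable def topHom {n : ℕ} (f : MvPolynomial (Fin n) ℚ) : MvPolynomial (Fin n) ℚ :=
  MvPolynomial.homogeneousComponent f.totalDegree f

/-- The set `QSV_n ⊆ S_n`. -/
def QSVset (n : ℕ) : Set (Equiv.Perm (Fin n)) := {σ | ∃ lam : NCP n, NCP.IsQ lam σ}

/-- The point `(σ(1), …, σ(n)) ∈ ℚⁿ` associated to a permutation (1-based labels). -/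
def permPoint {n : ℕ} (σ : Equiv.Perm (Fin n)) : Fin n → ℚ := fun i => ((σ i : ℕ) : ℚ) + 1

/-- `QSV_n` as a set of points in `ℚⁿ`. -/
def QSVpoints (n : ℕ) : Set (Fin n → ℚ) := {p | ∃ σ ∈ QSVset n, p = permPoint σ}

/-- The vanishing ideal of a set of points in `ℚⁿ`. -/
noncomputable def vanishingIdeal (n : ℕ) (S : Set (Fin n → ℚ)) :
    Ideal (MvPolynomial (Fin n) ℚ) where
  carrier := {f | ∀ p ∈ S, MvPolynomial.eval p f = 0}
  add_mem' := by
    intro a b ha hb p hp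
    simp [map_add, ha p hp, hb p hp]
  zero_mem' := by
    intro p hp
    simp
  smul_mem' := by
    intro c f hf p hp
    simp [smul_eq_mul, map_mul, hf p hp]

/-- The monomial quasisymmetric polynomials `M_α` for nonempty compositions `α`
with `ℓ(α) ≤ n`. -/
def MpolySet (n : ℕ) : Set (MvPolynomial (Fin n) ℚ) :=
  {f | ∃ k, ∃ α : Fin k → ℕ, 0 < k ∧ k ≤ n ∧ (∀ s, 0 < α s) ∧ f = Mpoly n k α}

/-- The vanishing polynomials `P_α` for nonempty compositions `α` with `ℓ(α) ≤ n`. -/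
def PpolySet (n : ℕ) : Set (MvPolynomial (Fin n) ℚ) :=
  {f | ∃ k, ∃ α : Fin k → ℕ, 0 < k ∧ k ≤ n ∧ (∀ s, 0 < α s) ∧ f = Ppoly n k α}

/-- The space `QSym_n` of quasisymmetric polynomials : the span of `1` and the `M_α`. -/
def QSym (n : ℕ) : Submodule ℚ (MvPolynomial (Fin n) ℚ) :=
  Submodule.span ℚ (insert 1 (MpolySet n))

/-- `QSym_n⁺` : quasisymmetric polynomials with zero constant term. -/
def QSymPlus (n : ℕ) : Set (MvPolynomial (Fin n) ℚ) :=
  {f | f ∈ QSym n ∧ MvPolynomial.constantCoeff f = 0}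

/-- `gr(I) = ⟨h(f) : f ∈ I⟩`. -/
noncomputable def grIdeal (n : ℕ) (I : Ideal (MvPolynomial (Fin n) ℚ)) :
    Ideal (MvPolynomial (Fin n) ℚ) :=
  Ideal.span (topHom '' (I : Set (MvPolynomial (Fin n) ℚ)))

/-! ### Auxiliary development for stmt6 -/

section Stmt6Aux

open Finset

variable {n : ℕ}

namespace NCPAux

variable (lam : NCP n)

lemma arc_lt {p : Fin n × Fin n} (hp : p ∈ lam.1) : p.1 < p.2 := lam.2.1 p hp

lemma arc_snd_inj {i j k : Fin n} (h1 : (i, k) ∈ lam.1) (h2 : (j, k) ∈ lam.1) : i = j := by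
  by_contra hne
  rcases lt_or_gt_of_ne hne with h | h
  · exact lam.2.2 _ h1 _ h2 (by simpa using hne)
      ⟨le_of_lt h, arc_lt lam h2, le_rfl⟩
  · exact lam.2.2 _ h2 _ h1 (by simpa using fun e => hne e.symm)
      ⟨le_of_lt h, arc_lt lam h1, le_rfl⟩

lemma noncross {u v u' v' : Fin n} (h1 : (u, v) ∈ lam.1) (h2 : (u', v') ∈ lam.1)
    (ha : u ≤ u') (hb : u' < v) (hc : v ≤ v') : (u, v) = (u', v') := by
  by_contra hne
  exact lam.2.2 _ h1 _ h2 hne ⟨ha, hb, hc⟩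

lemma connected_symm {x y : Fin n} (h : NCP.Connected lam x y) : NCP.Connected lam y x :=
  by
    induction h with
    | refl => exact Relation.ReflTransGen.refl
    | tail _ hbc ih => exact Relation.ReflTransGen.head hbc.symm ih

lemma connected_trans {x y z : Fin n} (h1 : NCP.Connected lam x y)
    (h2 : NCP.Connected lam y z) : NCP.Connected lam x z :=
  Relation.ReflTransGen.trans h1 h2

lemma mem_component {j z : Fin n} : z ∈ NCP.component lam j ↔ NCP.Connected lam j z := by
  simp [NCP.component]

lemma connected_compMax (j : Fin n) : NCP.Connected lam j (NCP.compMax lam j) :=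
  (mem_component lam).1 (Finset.max'_mem _ _)

lemma le_compMax {j z : Fin n} (h : NCP.Connected lam j z) : z ≤ NCP.compMax lam j :=
  Finset.le_max' _ _ ((mem_component lam).2 h)

lemma self_le_compMax (j : Fin n) : j ≤ NCP.compMax lam j :=
  le_compMax lam Relation.ReflTransGen.refl

lemma compMax_congr {x y : Fin n} (h : NCP.Connected lam x y) :
    NCP.compMax lam x = NCP.compMax lam y := by
  have hc : NCP.component lam x = NCP.component lam y := by
    ext z
    simp only [mem_component]
    exact ⟨fun hz => connected_trans lam (connected_symm lam h) hz,
      fun hz => connected_trans lam h hz⟩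
  simp only [NCP.compMax, hc]

lemma cross {x y b : Fin n} (h : NCP.Connected lam x y) (hxb : x < b) (hby : b ≤ y) :
    ∃ u v, (u, v) ∈ lam.1 ∧ u < b ∧ b ≤ v ∧ NCP.Connected lam x u := by
  induction h with
  | refl => exact absurd hby (not_le.mpr hxb)
  | @tail c y' hxc hcy ih =>
    by_cases hbc : b ≤ c
    · exact ih hbc
    · push_neg at hbc
      rcases hcy with harc | harc
      · exact ⟨c, y', harc, hbc, hby, hxc⟩
      · exact absurd hby (not_le.mpr (lt_trans (arc_lt lam harc) hbc))

lemma fwd {j z : Fin n} (hj : ∀ i, (i, j) ∉ lam.1) (h : NCP.Connected lam j z) :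
    Relation.ReflTransGen (fun x y => (x, y) ∈ lam.1) j z := by
  induction h with
  | refl => exact Relation.ReflTransGen.refl
  | @tail c y hjc hcy ih =>
    rcases hcy with harc | harc
    · exact ih.tail harc
    · rcases Relation.ReflTransGen.cases_tail ih with rfl | ⟨d, hd, hdc⟩
      · exact absurd harc (hj y)
      · have : d = y := arc_snd_inj lam hdc harc
        exact this ▸ hd

lemma min_of_not_rpos {j z : Fin n} (hj : ∀ i, (i, j) ∉ lam.1)
    (h : NCP.Connected lam j z) : j ≤ z := by
  have h2 := fwd lam hj h
  clear h
  induction h2 with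
  | refl => exact le_rfl
  | tail _ harc ih => exact le_trans ih (le_of_lt (arc_lt lam harc))

lemma mem_rpos_iff {j : Fin n} : j ∈ NCP.rpos lam ↔ ∃ i, (i, j) ∈ lam.1 := by
  constructor
  · intro h
    obtain ⟨⟨i, k⟩, hp, rfl⟩ := Finset.mem_image.1 h
    exact ⟨i, hp⟩
  · rintro ⟨i, hi⟩
    exact Finset.mem_image.2 ⟨(i, j), hi, rfl⟩

lemma mem_lpos_iff {j : Fin n} : j ∈ NCP.lpos lam ↔ ∃ k, (j, k) ∈ lam.1 := by
  constructor
  · intro h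
    obtain ⟨⟨i, k⟩, hp, rfl⟩ := Finset.mem_image.1 h
    exact ⟨k, hp⟩
  · rintro ⟨k, hk⟩
    exact Finset.mem_image.2 ⟨(j, k), hk, rfl⟩

end NCPAux

open Finset in
lemma image_erase_of_injOn {f : Fin n → Fin n} {P : Finset (Fin n)} (hfi : Set.InjOn f ↑P)
    {a : Fin n} (ha : a ∈ P) : (P.erase a).image f = (P.image f).erase (f a) := by
  ext y
  simp only [Finset.mem_image, Finset.mem_erase]
  constructor
  · rintro ⟨q, ⟨hqa, hqP⟩, rfl⟩
    exact ⟨fun e => hqa (hfi hqP ha e), q, hqP, rfl⟩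
  · rintro ⟨hne, q, hqP, rfl⟩
    exact ⟨q, ⟨fun e => hne (by rw [e]), hqP⟩, rfl⟩

/-- Pattern-1 freeness on a set of (weak excedance) positions. -/
def Pat1Free (f : Fin n → Fin n) (P : Finset (Fin n)) : Prop :=
  ∀ a ∈ P, ∀ b ∈ P, a < b → b ≤ f a → ¬ f a < f b

/-- Pattern-2 freeness on a set of (non-excedance) positions. -/
def Pat2Free (f : Fin n → Fin n) (N : Finset (Fin n)) : Prop :=
  ∀ a ∈ N, ∀ b ∈ N, a < b → f a < f b → ¬ f b < a

open Finset in
lemma auxA {P V : Finset (Fin n)} {f g : Fin n → Fin n} {vmax : Fin n}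
    (hgi : Set.InjOn g ↑P) (hfV : P.image f = V) (hgV : P.image g = V)
    (hfe : ∀ p ∈ P, p ≤ f p) (hge : ∀ p ∈ P, p ≤ g p) (hg1 : Pat1Free g P)
    (hmax : ∀ v ∈ V, v ≤ vmax) {a b : Fin n} (ha : a ∈ P) (hb : b ∈ P)
    (hfa : f a = vmax) (hgb : g b = vmax) : ¬ a < b := by
  intro hab
  classical
  set S := P.filter (· < b) with hS
  set T := V.filter (· < b) with hT
  have hmemS : ∀ p, p ∈ S ↔ p ∈ P ∧ p < b := by intro p; simp [hS]
  have hmemT : ∀ t, t ∈ T ↔ t ∈ V ∧ t < b := by intro t; simp [hT]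
  -- g maps S bijectively onto T
  have hgS : ∀ p ∈ S, g p ∈ T := by
    intro p hp
    obtain ⟨hpP, hpb⟩ := (hmemS p).1 hp
    have hgpV : g p ∈ V := hgV ▸ Finset.mem_image_of_mem g hpP
    have : g p < b := by
      by_contra hcon
      push_neg at hcon
      have h2 := hg1 p hpP b hb hpb hcon
      have h3 : g p = vmax := le_antisymm (hmax _ hgpV) (hgb ▸ not_lt.1 h2)
      exact absurd (hgi hpP hb (h3.trans hgb.symm)) (ne_of_lt hpb)
    exact (hmemT _).2 ⟨hgpV, this⟩
  have hTimg : T = S.image g := by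
    apply Finset.Subset.antisymm
    · intro t ht
      obtain ⟨htV, htb⟩ := (hmemT t).1 ht
      obtain ⟨q, hqP, rfl⟩ := Finset.mem_image.1 (hgV ▸ htV)
      exact Finset.mem_image_of_mem g ((hmemS q).2 ⟨hqP, lt_of_le_of_lt (hge q hqP) htb⟩)
    · intro t ht
      obtain ⟨q, hq, rfl⟩ := Finset.mem_image.1 ht
      exact hgS q hq
  have hcardST : S.card = T.card := by
    rw [hTimg]
    exact (Finset.card_image_of_injOn (hgi.mono (by intro x hx; exact (hmemS x).1 hx |>.1))).symm
  -- every element of T has an f-preimage in S.erase a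
  have hsub : T ⊆ (S.erase a).image f := by
    intro t ht
    obtain ⟨htV, htb⟩ := (hmemT t).1 ht
    obtain ⟨q, hqP, rfl⟩ := Finset.mem_image.1 (hfV ▸ htV)
    have hqb : q < b := lt_of_le_of_lt (hfe q hqP) htb
    have hqa : q ≠ a := by
      rintro rfl
      rw [hfa] at htb
      exact absurd (lt_of_le_of_lt (hgb ▸ hge b hb) htb) (lt_irrefl _)
    exact Finset.mem_image_of_mem f (Finset.mem_erase.2 ⟨hqa, (hmemS q).2 ⟨hqP, hqb⟩⟩)
  have haS : a ∈ S := (hmemS a).2 ⟨ha, hab⟩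
  have h1 : T.card ≤ (S.erase a).card :=
    le_trans (Finset.card_le_card hsub) Finset.card_image_le
  rw [Finset.card_erase_of_mem haS] at h1
  have h2 : 0 < S.card := Finset.card_pos.2 ⟨a, haS⟩
  omega

open Finset in
lemma uniqA : ∀ (P V : Finset (Fin n)) (f g : Fin n → Fin n),
    Set.InjOn f ↑P → Set.InjOn g ↑P → P.image f = V → P.image g = V →
    (∀ p ∈ P, p ≤ f p) → (∀ p ∈ P, p ≤ g p) →
    Pat1Free f P → Pat1Free g P → ∀ p ∈ P, f p = g p := by
  intro P
  induction P using Finset.strongInduction with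
  | _ P ih =>
    intro V f g hfi hgi hfV hgV hfe hge hf1 hg1 p hp
    have hVne : V.Nonempty := hfV ▸ (Finset.Nonempty.image ⟨p, hp⟩ f)
    set vmax := V.max' hVne with hvmax
    have hmax : ∀ v ∈ V, v ≤ vmax := fun v hv => Finset.le_max' V v hv
    have hv1 : vmax ∈ P.image f := by rw [hfV]; exact V.max'_mem hVne
    have hv2 : vmax ∈ P.image g := by rw [hgV]; exact V.max'_mem hVne
    obtain ⟨a, ha, hfa⟩ := Finset.mem_image.1 hv1
    obtain ⟨b, hb, hgb⟩ := Finset.mem_image.1 hv2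
    have hab : a = b := by
      rcases lt_trichotomy a b with h | h | h
      · exact absurd h (auxA hgi hfV hgV hfe hge hg1 hmax ha hb hfa hgb)
      · exact h
      · exact absurd h (auxA hfi hgV hfV hge hfe hf1 hmax hb ha hgb hfa)
    subst hab
    by_cases hpa : p = a
    · subst hpa; rw [hfa, hgb]
    · have hsub : P.erase a ⊂ P := Finset.erase_ssubset ha
      have hfV' : (P.erase a).image f = V.erase vmax := by
        rw [image_erase_of_injOn hfi ha, hfV, hfa]
      have hgV' : (P.erase a).image g = V.erase vmax := by
        rw [image_erase_of_injOn hgi ha, hgV, hgb]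
      have hEP : ↑(P.erase a) ⊆ (↑P : Set (Fin n)) := by
        intro x hx; exact Finset.mem_of_mem_erase hx
      exact ih (P.erase a) hsub (V.erase vmax) f g (hfi.mono hEP) (hgi.mono hEP)
        hfV' hgV'
        (fun q hq => hfe q (Finset.mem_of_mem_erase hq))
        (fun q hq => hge q (Finset.mem_of_mem_erase hq))
        (fun x hx y hy => hf1 x (Finset.mem_of_mem_erase hx) y (Finset.mem_of_mem_erase hy))
        (fun x hx y hy => hg1 x (Finset.mem_of_mem_erase hx) y (Finset.mem_of_mem_erase hy))
        p (Finset.mem_erase.2 ⟨hpa, hp⟩)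

open Finset in
lemma auxB {N W : Finset (Fin n)} {f g : Fin n → Fin n} {wmin : Fin n}
    (hfi : Set.InjOn f ↑N) (hfW : N.image f = W) (hgW : N.image g = W)
    (hfe : ∀ p ∈ N, f p < p) (hge : ∀ p ∈ N, g p < p) (hf2 : Pat2Free f N)
    (hmin : ∀ w ∈ W, wmin ≤ w) {a b : Fin n} (ha : a ∈ N) (hb : b ∈ N)
    (hfa : f a = wmin) (hgb : g b = wmin) : ¬ a < b := by
  intro hab
  classical
  set S := N.filter (a < ·) with hS
  set T := W.filter (a ≤ ·) with hT
  have hmemS : ∀ p, p ∈ S ↔ p ∈ N ∧ a < p := by intro p; simp [hS]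
  have hmemT : ∀ t, t ∈ T ↔ t ∈ W ∧ a ≤ t := by intro t; simp [hT]
  have hwa : wmin < a := hfa ▸ hfe a ha
  -- f maps S bijectively onto T
  have hfS : ∀ p ∈ S, f p ∈ T := by
    intro p hp
    obtain ⟨hpN, hap⟩ := (hmemS p).1 hp
    have hfpW : f p ∈ W := hfW ▸ Finset.mem_image_of_mem f hpN
    have hne : f a < f p := by
      have h0 : f a ≤ f p := by rw [hfa]; exact hmin _ hfpW
      rcases lt_or_eq_of_le h0 with h | h
      · exact h
      · exact absurd (hfi ha hpN h) (ne_of_lt hap)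
    have : a ≤ f p := not_lt.1 (hf2 a ha p hpN hap hne)
    exact (hmemT _).2 ⟨hfpW, this⟩
  have hTimg : T = S.image f := by
    apply Finset.Subset.antisymm
    · intro t ht
      obtain ⟨htW, hat⟩ := (hmemT t).1 ht
      obtain ⟨q, hqN, rfl⟩ := Finset.mem_image.1 (hfW ▸ htW)
      exact Finset.mem_image_of_mem f ((hmemS q).2 ⟨hqN, lt_of_le_of_lt hat (hfe q hqN)⟩)
    · intro t ht
      obtain ⟨q, hq, rfl⟩ := Finset.mem_image.1 ht
      exact hfS q hq
  have hcardST : S.card = T.card := by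
    rw [hTimg]
    exact (Finset.card_image_of_injOn (hfi.mono (by intro x hx; exact (hmemS x).1 hx |>.1))).symm
  -- every element of T has a g-preimage in S.erase b
  have hsub : T ⊆ (S.erase b).image g := by
    intro t ht
    obtain ⟨htW, hat⟩ := (hmemT t).1 ht
    obtain ⟨q, hqN, rfl⟩ := Finset.mem_image.1 (hgW ▸ htW)
    have haq : a < q := lt_of_le_of_lt hat (hge q hqN)
    have hqb : q ≠ b := by
      rintro rfl
      rw [hgb] at hat
      exact absurd (lt_of_le_of_lt hat hwa) (lt_irrefl _)
    exact Finset.mem_image_of_mem g (Finset.mem_erase.2 ⟨hqb, (hmemS q).2 ⟨hqN, haq⟩⟩)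
  have hbS : b ∈ S := (hmemS b).2 ⟨hb, hab⟩
  have h1 : T.card ≤ (S.erase b).card :=
    le_trans (Finset.card_le_card hsub) Finset.card_image_le
  rw [Finset.card_erase_of_mem hbS] at h1
  have h2 : 0 < S.card := Finset.card_pos.2 ⟨b, hbS⟩
  omega

open Finset in
lemma uniqB : ∀ (N W : Finset (Fin n)) (f g : Fin n → Fin n),
    Set.InjOn f ↑N → Set.InjOn g ↑N → N.image f = W → N.image g = W →
    (∀ p ∈ N, f p < p) → (∀ p ∈ N, g p < p) →
    Pat2Free f N → Pat2Free g N → ∀ p ∈ N, f p = g p := by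
  intro N
  induction N using Finset.strongInduction with
  | _ N ih =>
    intro W f g hfi hgi hfW hgW hfe hge hf2 hg2 p hp
    have hWne : W.Nonempty := hfW ▸ (Finset.Nonempty.image ⟨p, hp⟩ f)
    set wmin := W.min' hWne with hwmin
    have hmin : ∀ w ∈ W, wmin ≤ w := fun w hw => Finset.min'_le W w hw
    have hv1 : wmin ∈ N.image f := by rw [hfW]; exact W.min'_mem hWne
    have hv2 : wmin ∈ N.image g := by rw [hgW]; exact W.min'_mem hWne
    obtain ⟨a, ha, hfa⟩ := Finset.mem_image.1 hv1
    obtain ⟨b, hb, hgb⟩ := Finset.mem_image.1 hv2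
    have hab : a = b := by
      rcases lt_trichotomy a b with h | h | h
      · exact absurd h (auxB hfi hfW hgW hfe hge hf2 hmin ha hb hfa hgb)
      · exact h
      · exact absurd h (auxB hgi hgW hfW hge hfe hg2 hmin hb ha hgb hfa)
    subst hab
    by_cases hpa : p = a
    · subst hpa; rw [hfa, hgb]
    · have hsub : N.erase a ⊂ N := Finset.erase_ssubset ha
      have hfW' : (N.erase a).image f = W.erase wmin := by
        rw [image_erase_of_injOn hfi ha, hfW, hfa]
      have hgW' : (N.erase a).image g = W.erase wmin := by
        rw [image_erase_of_injOn hgi ha, hgW, hgb]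
      have hEP : ↑(N.erase a) ⊆ (↑N : Set (Fin n)) := by
        intro x hx; exact Finset.mem_of_mem_erase hx
      exact ih (N.erase a) hsub (W.erase wmin) f g (hfi.mono hEP) (hgi.mono hEP)
        hfW' hgW'
        (fun q hq => hfe q (Finset.mem_of_mem_erase hq))
        (fun q hq => hge q (Finset.mem_of_mem_erase hq))
        (fun x hx y hy => hf2 x (Finset.mem_of_mem_erase hx) y (Finset.mem_of_mem_erase hy))
        (fun x hx y hy => hg2 x (Finset.mem_of_mem_erase hx) y (Finset.mem_of_mem_erase hy))
        p (Finset.mem_erase.2 ⟨hpa, hp⟩)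



open Finset in
lemma len_lt (w : Equiv.Perm (Fin n)) (a b : Fin n) (hab : a < b) (hvab : w a < w b) :
    bruhatLen w < bruhatLen (Equiv.swap (w a) (w b) * w) := by
  classical
  set w' := Equiv.swap (w a) (w b) * w with hw'def
  have hwa : w' a = w b := by
    simp [hw'def, Equiv.Perm.mul_apply, Equiv.swap_apply_left]
  have hwb : w' b = w a := by
    simp [hw'def, Equiv.Perm.mul_apply, Equiv.swap_apply_right]
  have hwx : ∀ x, x ≠ a → x ≠ b → w' x = w x := by
    intro x h1 h2
    simp only [hw'def, Equiv.Perm.mul_apply]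
    exact Equiv.swap_apply_of_ne_of_ne (fun e => h1 (w.injective e)) (fun e => h2 (w.injective e))
  set I := Finset.univ.filter fun p : Fin n × Fin n => p.1 < p.2 ∧ w p.2 < w p.1 with hI
  set I' := Finset.univ.filter fun p : Fin n × Fin n => p.1 < p.2 ∧ w' p.2 < w' p.1 with hI'
  have hmemI : ∀ x y : Fin n, (x, y) ∈ I ↔ x < y ∧ w y < w x := by
    intro x y; simp [hI]
  have hmemI' : ∀ x y : Fin n, (x, y) ∈ I' ↔ x < y ∧ w' y < w' x := by
    intro x y; simp [hI']
  set F : Fin n × Fin n → Fin n × Fin n := fun p =>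
    if p.2 = a ∧ w p.1 < w b then (p.1, b)
    else if p.1 = b ∧ w a < w p.2 then (a, p.2) else p with hF
  have hFc1 : ∀ x y : Fin n, y = a → w x < w b → F (x, y) = (x, b) := by
    intro x y h1 h2; simp [hF, h1, h2]
  have hFc2 : ∀ x y : Fin n, x = b → y ≠ a → w a < w y → F (x, y) = (a, y) := by
    intro x y h0 h1 h2; simp [hF, h0, h1, h2]
  have hFc3 : ∀ x y : Fin n, ¬(y = a ∧ w x < w b) → ¬(x = b ∧ w a < w y) →
      F (x, y) = (x, y) := by
    intro x y h1 h2
    simp only [hF]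
    rw [if_neg h1, if_neg h2]
  -- basic consequences used repeatedly
  have hyne : ∀ x y : Fin n, x = b → x < y → y ≠ a :=
    fun x y e h => fun e2 => absurd ((e ▸ e2 ▸ h : b < a)) (not_lt.2 (le_of_lt hab))
  -- maps to
  have hmaps : ∀ p ∈ I, F p ∈ I' := by
    rintro ⟨x, y⟩ hp
    obtain ⟨hxy, hinv⟩ := (hmemI x y).1 hp
    by_cases hc1 : y = a ∧ w x < w b
    · obtain ⟨hya, hxb⟩ := hc1
      have hxa : x < a := hya ▸ hxy
      rw [hFc1 x y hya hxb]
      refine (hmemI' x b).2 ⟨lt_trans hxa hab, ?_⟩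
      rw [hwb, hwx x (ne_of_lt hxa) (ne_of_lt (lt_trans hxa hab))]
      rw [hya] at hinv
      exact hinv
    · by_cases hc2 : x = b ∧ w a < w y
      · obtain ⟨hxb, hay⟩ := hc2
        have hya : y ≠ a := hyne x y hxb hxy
        have hby : b < y := hxb ▸ hxy
        rw [hFc2 x y hxb hya hay]
        refine (hmemI' a y).2 ⟨lt_trans hab hby, ?_⟩
        rw [hwa, hwx y hya (ne_of_gt hby)]
        rw [hxb] at hinv
        exact hinv
      · rw [hFc3 x y hc1 hc2]
        refine (hmemI' x y).2 ⟨hxy, ?_⟩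
        by_cases hya : y = a
        · have hxb : ¬ w x < w b := fun h => hc1 ⟨hya, h⟩
          have hxa : x ≠ a := fun e => by rw [e, hya] at hxy; exact absurd hxy (lt_irrefl a)
          have hxa' : x < a := hya ▸ hxy
          have hxlb : x ≠ b := ne_of_lt (lt_trans hxa' hab)
          rw [hya, hwa, hwx x hxa hxlb]
          rcases lt_or_eq_of_le (not_lt.1 hxb) with h | h
          · exact h
          · exact absurd (w.injective h) (Ne.symm hxlb)
        · by_cases hyb : y = b
          · have hxa : x ≠ a := by
              intro e
              rw [e, hyb] at hinv
              exact absurd hinv (not_lt.2 (le_of_lt hvab))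
            have hxb : x ≠ b := hyb ▸ ne_of_lt hxy
            rw [hyb, hwb, hwx x hxa hxb]
            rw [hyb] at hinv
            exact lt_trans hvab hinv
          · by_cases hxa : x = a
            · rw [hxa, hwa, hwx y hya hyb]
              rw [hxa] at hinv
              exact lt_trans hinv hvab
            · by_cases hxb : x = b
              · have hay : ¬ w a < w y := fun h => hc2 ⟨hxb, h⟩
                rw [hxb, hwb, hwx y hya hyb]
                rcases lt_or_eq_of_le (not_lt.1 hay) with h | h
                · exact h
                · exact absurd (w.injective h) hya
              · rw [hwx x hxa hxb, hwx y hya hyb]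
                exact hinv
  -- injective on I
  have hinj : Set.InjOn F ↑I := by
    rintro ⟨x, y⟩ hp ⟨x', y'⟩ hq heq
    have hp' : (x, y) ∈ I := hp
    have hq' : (x', y') ∈ I := hq
    obtain ⟨hxy, hinvp⟩ := (hmemI x y).1 hp'
    obtain ⟨hxy', hinvq⟩ := (hmemI x' y').1 hq'
    by_cases hc1p : y = a ∧ w x < w b <;> by_cases hc1q : y' = a ∧ w x' < w b
    · -- both C1
      obtain ⟨hya, hxb⟩ := hc1p; obtain ⟨hya', hxb'⟩ := hc1q
      rw [hFc1 x y hya hxb, hFc1 x' y' hya' hxb'] at heq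
      injection heq with h1 h2
      rw [h1, hya, hya']
    · -- p C1, q not C1
      obtain ⟨hya, hxb⟩ := hc1p
      rw [hFc1 x y hya hxb] at heq
      by_cases hc2q : x' = b ∧ w a < w y'
      · obtain ⟨hxb', hay'⟩ := hc2q
        rw [hFc2 x' y' hxb' (hyne x' y' hxb' hxy') hay'] at heq
        injection heq with h1 h2
        have : x < a := hya ▸ hxy
        rw [h1] at this
        exact absurd this (lt_irrefl a)
      · rw [hFc3 x' y' hc1q hc2q] at heq
        injection heq with h1 h2
        rw [← h1, ← h2] at hinvq
        exact absurd hinvq (not_lt.2 (le_of_lt hxb))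
    · -- q C1, p not C1
      obtain ⟨hya', hxb'⟩ := hc1q
      rw [hFc1 x' y' hya' hxb'] at heq
      by_cases hc2p : x = b ∧ w a < w y
      · obtain ⟨hxb, hay⟩ := hc2p
        rw [hFc2 x y hxb (hyne x y hxb hxy) hay] at heq
        injection heq with h1 h2
        have : x' < a := hya' ▸ hxy'
        rw [← h1] at this
        exact absurd this (lt_irrefl a)
      · rw [hFc3 x y hc1p hc2p] at heq
        injection heq with h1 h2
        rw [h1, h2] at hinvp
        exact absurd hinvp (not_lt.2 (le_of_lt hxb'))
    · -- neither C1
      by_cases hc2p : x = b ∧ w a < w y <;> by_cases hc2q : x' = b ∧ w a < w y'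
      · obtain ⟨hxb, hay⟩ := hc2p; obtain ⟨hxb', hay'⟩ := hc2q
        rw [hFc2 x y hxb (hyne x y hxb hxy) hay,
          hFc2 x' y' hxb' (hyne x' y' hxb' hxy') hay'] at heq
        injection heq with h1 h2
        rw [h2, hxb, hxb']
      · obtain ⟨hxb, hay⟩ := hc2p
        rw [hFc2 x y hxb (hyne x y hxb hxy) hay, hFc3 x' y' hc1q hc2q] at heq
        injection heq with h1 h2
        rw [← h1, ← h2] at hinvq
        exact absurd hinvq (not_lt.2 (le_of_lt hay))
      · obtain ⟨hxb', hay'⟩ := hc2q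
        rw [hFc2 x' y' hxb' (hyne x' y' hxb' hxy') hay', hFc3 x y hc1p hc2p] at heq
        injection heq with h1 h2
        rw [h1, h2] at hinvp
        exact absurd hinvp (not_lt.2 (le_of_lt hay'))
      · rw [hFc3 x y hc1p hc2p, hFc3 x' y' hc1q hc2q] at heq
        exact heq
  -- (a, b) is a new inversion not in the image
  have habI' : (a, b) ∈ I' := (hmemI' a b).2 ⟨hab, by rw [hwa, hwb]; exact hvab⟩
  have hnotin : (a, b) ∉ I.image F := by
    intro hmem
    obtain ⟨⟨x, y⟩, hp, heq⟩ := Finset.mem_image.1 hmem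
    obtain ⟨hxy, hinvp⟩ := (hmemI x y).1 hp
    by_cases hc1 : y = a ∧ w x < w b
    · obtain ⟨hya, hxb⟩ := hc1
      rw [hFc1 x y hya hxb] at heq
      injection heq with h1 h2
      have : x < a := hya ▸ hxy
      rw [h1] at this
      exact absurd this (lt_irrefl a)
    · by_cases hc2 : x = b ∧ w a < w y
      · obtain ⟨hxb, hay⟩ := hc2
        rw [hFc2 x y hxb (hyne x y hxb hxy) hay] at heq
        injection heq with h1 h2
        have : b < y := hxb ▸ hxy
        rw [h2] at this
        exact absurd this (lt_irrefl b)
      · rw [hFc3 x y hc1 hc2] at heq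
        injection heq with h1 h2
        rw [h1, h2] at hinvp
        exact absurd hinvp (not_lt.2 (le_of_lt hvab))
  have hsub : I.image F ⊆ I'.erase (a, b) := by
    intro q hq
    obtain ⟨p, hp, rfl⟩ := Finset.mem_image.1 hq
    refine Finset.mem_erase.2 ⟨?_, hmaps p hp⟩
    intro e
    exact hnotin (e ▸ hq)
  have h1 : I.card = (I.image F).card := (Finset.card_image_of_injOn hinj).symm
  have h2 : (I.image F).card ≤ (I'.erase (a, b)).card := Finset.card_le_card hsub
  have h3 : (I'.erase (a, b)).card < I'.card := Finset.card_erase_lt_of_mem habI'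
  have e1 : bruhatLen w = I.card := by rw [hI]; rfl
  have e2 : bruhatLen w' = I'.card := by rw [hI']; rfl
  rw [e1, e2]
  omega


namespace NCPAux

variable (lam : NCP n)

lemma arc_fst_inj {i j k : Fin n} (h1 : (i, j) ∈ lam.1) (h2 : (i, k) ∈ lam.1) : j = k := by
  by_contra hne
  rcases lt_or_gt_of_ne hne with h | h
  · exact lam.2.2 _ h1 _ h2 (by simpa using hne)
      ⟨le_rfl, arc_lt lam h1, le_of_lt h⟩
  · exact lam.2.2 _ h2 _ h1 (by simpa using fun e => hne e.symm)
      ⟨le_rfl, arc_lt lam h2, le_of_lt h⟩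

lemma lpos_card (lam : NCP n) : (NCP.lpos lam).card = (NCP.rpos lam).card := by
  have hfst : Set.InjOn Prod.fst (lam.1 : Set (Fin n × Fin n)) := by
    intro p hp q hq h
    have hp' : (p.1, p.2) ∈ lam.1 := by simpa using hp
    have hq' : (q.1, q.2) ∈ lam.1 := by simpa using hq
    rw [h] at hp'
    exact Prod.ext h (arc_fst_inj lam hp' hq')
  have hsnd : Set.InjOn Prod.snd (lam.1 : Set (Fin n × Fin n)) := by
    intro p hp q hq h
    have hp' : (p.1, p.2) ∈ lam.1 := by simpa using hp
    have hq' : (q.1, q.2) ∈ lam.1 := by simpa using hq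
    rw [h] at hp'
    exact Prod.ext (arc_snd_inj lam hp' hq') h
  unfold NCP.lpos NCP.rpos
  rw [Finset.card_image_of_injOn hfst, Finset.card_image_of_injOn hsnd]

variable {Q : Equiv.Perm (Fin n)}

lemma Q_rpos (hQ : NCP.IsQ lam Q) {j : Fin n} (hj : j ∈ NCP.rpos lam) :
    (Q j, j) ∈ lam.1 := by
  have h : ∃ i, (i, j) ∈ lam.1 := (mem_rpos_iff lam).1 hj
  have : Q j = h.choose := by rw [hQ j, NCP.Qfun, dif_pos h]
  rw [this]
  exact h.choose_spec

lemma Q_not_rpos (hQ : NCP.IsQ lam Q) {j : Fin n} (hj : j ∉ NCP.rpos lam) :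
    Q j = NCP.compMax lam j := by
  rw [hQ j, NCP.Qfun, dif_neg]
  intro h
  exact hj ((mem_rpos_iff lam).2 h)

lemma excPos_Q (hQ : NCP.IsQ lam Q) : ExcPos Q = Finset.univ \ NCP.rpos lam := by
  ext j
  simp only [ExcPos, Finset.mem_filter, Finset.mem_univ, true_and, Finset.mem_sdiff]
  constructor
  · intro h hj
    exact absurd h (not_le.2 (arc_lt lam (Q_rpos lam hQ hj)))
  · intro hj
    rw [Q_not_rpos lam hQ hj]
    exact self_le_compMax lam j

lemma excVal_Q (hQ : NCP.IsQ lam Q) : ExcVal Q = Finset.univ \ NCP.lpos lam := by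
  have hsub : ExcVal Q ⊆ Finset.univ \ NCP.lpos lam := by
    intro v hv
    obtain ⟨j, hj, rfl⟩ := Finset.mem_image.1 hv
    have hjE : j ≤ Q j := (Finset.mem_filter.1 hj).2
    have hjr : j ∉ NCP.rpos lam := by
      intro hr
      exact absurd hjE (not_le.2 (arc_lt lam (Q_rpos lam hQ hr)))
    rw [Q_not_rpos lam hQ hjr]
    refine Finset.mem_sdiff.2 ⟨Finset.mem_univ _, fun hl => ?_⟩
    obtain ⟨k, hk⟩ := (mem_lpos_iff lam).1 hl
    have h2 : NCP.Connected lam j k := (connected_compMax lam j).tail (Or.inl hk)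
    exact absurd (arc_lt lam hk) (not_lt.2 (le_compMax lam h2))
  refine (Finset.eq_of_subset_of_card_le hsub ?_).symm.symm
  have h1 : (ExcVal Q).card = (ExcPos Q).card :=
    Finset.card_image_of_injective _ Q.injective
  have h2 : (ExcPos Q).card = (Finset.univ \ NCP.rpos lam).card := by
    rw [excPos_Q lam hQ]
  have h3 : (Finset.univ \ NCP.rpos lam).card
      = Finset.univ.card - (NCP.rpos lam).card :=
    Finset.card_sdiff_of_subset (Finset.subset_univ _)
  have h4 : (Finset.univ \ NCP.lpos lam).card
      = Finset.univ.card - (NCP.lpos lam).card :=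
    Finset.card_sdiff_of_subset (Finset.subset_univ _)
  have h5 := lpos_card lam
  omega

lemma Q_pat1 (hQ : NCP.IsQ lam Q) : Pat1Free Q (Finset.univ \ NCP.rpos lam) := by
  intro a ha b hb hab hle hlt
  have har : a ∉ NCP.rpos lam := (Finset.mem_sdiff.1 ha).2
  have hbr : b ∉ NCP.rpos lam := (Finset.mem_sdiff.1 hb).2
  rw [Q_not_rpos lam hQ har] at hle hlt
  rw [Q_not_rpos lam hQ hbr] at hlt
  have hnc : ¬ NCP.Connected lam a b := by
    intro h
    rw [compMax_congr lam h] at hlt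
    exact lt_irrefl _ hlt
  obtain ⟨u, v, huv, hub, hbv, hconn⟩ := cross lam (connected_compMax lam a) hab hle
  have hav : NCP.Connected lam a v := hconn.tail (Or.inl huv)
  have hvle : v ≤ NCP.compMax lam a := le_compMax lam hav
  have hbv' : b < v := lt_of_le_of_ne hbv (fun e => hnc (e ▸ hav))
  obtain ⟨u', v', huv', hu'v, hvv', hconn'⟩ :=
    cross lam (connected_compMax lam b) hbv' (le_trans hvle (le_of_lt hlt))
  have hbu' : b ≤ u' :=
    min_of_not_rpos lam (fun i hi => hbr ((mem_rpos_iff lam).2 ⟨i, hi⟩)) hconn'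
  have hne2 : (u, v) ≠ (u', v') := by
    intro e
    injection e with e1 e2
    rw [e1] at hub
    exact absurd (lt_of_le_of_lt hbu' hub) (lt_irrefl b)
  exact lam.2.2 _ huv _ huv' hne2 ⟨le_trans (le_of_lt hub) hbu', hu'v, hvv'⟩

lemma Q_pat2 (hQ : NCP.IsQ lam Q) : Pat2Free Q (NCP.rpos lam) := by
  intro a ha b hb hab hvab hba
  have h1 := Q_rpos lam hQ ha
  have h2 := Q_rpos lam hQ hb
  have hne : (Q a, a) ≠ (Q b, b) := by
    intro e
    injection e with e1 e2
    exact absurd (e2 ▸ hab) (lt_irrefl b)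
  exact lam.2.2 _ h1 _ h2 hne ⟨le_of_lt hvab, hba, le_of_lt hab⟩

end NCPAux

/-- Existence of an upward pattern. -/
def HasPat (w : Equiv.Perm (Fin n)) : Prop :=
  (∃ a b : Fin n, a < b ∧ a ≤ w a ∧ b ≤ w b ∧ b ≤ w a ∧ w a < w b) ∨
  (∃ a b : Fin n, a < b ∧ w a < a ∧ w b < b ∧ w a < w b ∧ w b < a)

open Finset in
lemma exc_swap (w : Equiv.Perm (Fin n)) (a b : Fin n)
    (hiff_a : a ≤ w b ↔ a ≤ w a) (hiff_b : b ≤ w a ↔ b ≤ w b)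
    (hsame : (a ≤ w a) ↔ (b ≤ w b)) :
    ExcPos (Equiv.swap (w a) (w b) * w) = ExcPos w ∧
      ExcVal (Equiv.swap (w a) (w b) * w) = ExcVal w := by
  classical
  set w' := Equiv.swap (w a) (w b) * w with hw'def
  have hwa : w' a = w b := by
    simp [hw'def, Equiv.Perm.mul_apply, Equiv.swap_apply_left]
  have hwb : w' b = w a := by
    simp [hw'def, Equiv.Perm.mul_apply, Equiv.swap_apply_right]
  have hwx : ∀ x, x ≠ a → x ≠ b → w' x = w x := by
    intro x h1 h2
    simp only [hw'def, Equiv.Perm.mul_apply]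
    exact Equiv.swap_apply_of_ne_of_ne (fun e => h1 (w.injective e))
      (fun e => h2 (w.injective e))
  have hmemE : ∀ x : Fin n, x ∈ ExcPos w ↔ x ≤ w x := by
    intro x; simp [ExcPos]
  have hmemE' : ∀ x : Fin n, x ∈ ExcPos w' ↔ x ≤ w' x := by
    intro x; simp [ExcPos]
  have hEP : ExcPos w' = ExcPos w := by
    ext x
    rw [hmemE, hmemE']
    by_cases hxa : x = a
    · rw [hxa, hwa]; exact hiff_a
    · by_cases hxb : x = b
      · rw [hxb, hwb]; exact hiff_b
      · rw [hwx x hxa hxb]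
  refine ⟨hEP, ?_⟩
  unfold ExcVal
  rw [hEP]
  apply Finset.Subset.antisymm
  · intro v hv
    obtain ⟨x, hx, rfl⟩ := Finset.mem_image.1 hv
    by_cases hxa : x = a
    · rw [hxa, hwa]
      refine Finset.mem_image_of_mem w ((hmemE b).2 ?_)
      exact hsame.1 ((hmemE a).1 (hxa ▸ hx))
    · by_cases hxb : x = b
      · rw [hxb, hwb]
        refine Finset.mem_image_of_mem w ((hmemE a).2 ?_)
        exact hsame.2 ((hmemE b).1 (hxb ▸ hx))
      · rw [hwx x hxa hxb]
        exact Finset.mem_image_of_mem w hx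
  · intro v hv
    obtain ⟨x, hx, rfl⟩ := Finset.mem_image.1 hv
    by_cases hxa : x = a
    · rw [hxa, ← hwb]
      refine Finset.mem_image_of_mem w' ((hmemE b).2 ?_)
      exact hsame.1 ((hmemE a).1 (hxa ▸ hx))
    · by_cases hxb : x = b
      · rw [hxb, ← hwa]
        refine Finset.mem_image_of_mem w' ((hmemE a).2 ?_)
        exact hsame.2 ((hmemE b).1 (hxb ▸ hx))
      · rw [← hwx x hxa hxb]
        exact Finset.mem_image_of_mem w' hx

open Finset in
lemma step_lemma {lam : NCP n} {w : Equiv.Perm (Fin n)} (hw : w ∈ NCP.Cset lam)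
    (h : HasPat w) :
    ∃ w', w' ∈ NCP.Cset lam ∧ (w' * w⁻¹).IsSwap ∧ bruhatLen w < bruhatLen w' := by
  classical
  have hswap : ∀ a b : Fin n, w a < w b →
      ((Equiv.swap (w a) (w b) * w) * w⁻¹).IsSwap := by
    intro a b hvab
    refine ⟨w a, w b, ne_of_lt hvab, ?_⟩
    rw [mul_inv_cancel_right]
  obtain (⟨a, b, hab, hea, heb, hba, hvab⟩ | ⟨a, b, hab, hea, heb, hvab, hba⟩) := h
  · obtain ⟨hEP, hEV⟩ := exc_swap w a b
      (iff_of_true (le_of_lt (lt_of_lt_of_le hab heb)) hea)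
      (iff_of_true hba heb) (iff_of_true hea heb)
    exact ⟨Equiv.swap (w a) (w b) * w, ⟨hEV ▸ hw.1, hEP ▸ hw.2⟩, hswap a b hvab,
      len_lt w a b hab hvab⟩
  · obtain ⟨hEP, hEV⟩ := exc_swap w a b
      (iff_of_false (not_le.2 hba) (not_le.2 hea))
      (iff_of_false (not_le.2 (lt_trans hvab heb)) (not_le.2 heb))
      (iff_of_false (not_le.2 hea) (not_le.2 heb))
    exact ⟨Equiv.swap (w a) (w b) * w, ⟨hEV ▸ hw.1, hEP ▸ hw.2⟩, hswap a b hvab,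
      len_lt w a b hab hvab⟩


open Finset in
lemma bruhatLen_le (w : Equiv.Perm (Fin n)) : bruhatLen w ≤ n * n := by
  unfold bruhatLen
  calc (Finset.univ.filter fun p : Fin n × Fin n => p.1 < p.2 ∧ w p.2 < w p.1).card
      ≤ (Finset.univ : Finset (Fin n × Fin n)).card := Finset.card_filter_le _ _
    _ = n * n := by simp [Finset.card_univ]

open Finset in
lemma noPat_eq {lam : NCP n} {w Q : Equiv.Perm (Fin n)} (hw : w ∈ NCP.Cset lam)
    (hQmem : Q ∈ NCP.Cset lam) (hQ1 : Pat1Free Q (ExcPos Q))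
    (hQ2 : Pat2Free Q (Finset.univ \ ExcPos Q)) (hpat : ¬ HasPat w) : w = Q := by
  classical
  have hP : ExcPos w = ExcPos Q := hw.2.trans hQmem.2.symm
  have hV : ExcVal w = ExcVal Q := hw.1.trans hQmem.1.symm
  have hmemw : ∀ x : Fin n, x ∈ ExcPos w ↔ x ≤ w x := by intro x; simp [ExcPos]
  have hmemQ : ∀ x : Fin n, x ∈ ExcPos Q ↔ x ≤ Q x := by intro x; simp [ExcPos]
  have hwinj : Set.InjOn w ↑(ExcPos Q) := fun x _ y _ h => w.injective h
  have hQinj : Set.InjOn Q ↑(ExcPos Q) := fun x _ y _ h => Q.injective h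
  have hwimg : (ExcPos Q).image w = ExcVal Q := by
    rw [← hP]
    exact hV
  have hwexc : ∀ p ∈ ExcPos Q, p ≤ w p := by
    intro p hp
    rw [← hP] at hp
    exact (hmemw p).1 hp
  have hQexc : ∀ p ∈ ExcPos Q, p ≤ Q p := fun p hp => (hmemQ p).1 hp
  have hw1 : Pat1Free w (ExcPos Q) := by
    intro a ha b hb hab hle hlt
    exact hpat (Or.inl ⟨a, b, hab, hwexc a ha, hwexc b hb, hle, hlt⟩)
  have hA : ∀ p ∈ ExcPos Q, w p = Q p :=
    uniqA (ExcPos Q) (ExcVal Q) w Q hwinj hQinj hwimg rfl hwexc hQexc hw1 hQ1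
  -- non-excedance part
  set N := Finset.univ \ ExcPos Q with hN
  have hNw : ∀ p ∈ N, w p < p := by
    intro p hp
    have : p ∉ ExcPos w := by rw [hP]; exact (Finset.mem_sdiff.1 hp).2
    exact not_le.1 (fun hc => this ((hmemw p).2 hc))
  have hNQ : ∀ p ∈ N, Q p < p := by
    intro p hp
    have : p ∉ ExcPos Q := (Finset.mem_sdiff.1 hp).2
    exact not_le.1 (fun hc => this ((hmemQ p).2 hc))
  have hwinj' : Set.InjOn w ↑N := fun x _ y _ h => w.injective h
  have hQinj' : Set.InjOn Q ↑N := fun x _ y _ h => Q.injective h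
  have hwimg' : N.image w = Finset.univ \ ExcVal Q := by
    rw [hN, ← hP, ← hV, Finset.image_sdiff _ _ w.injective,
      Finset.image_univ_of_surjective w.surjective]
    rfl
  have hQimg' : N.image Q = Finset.univ \ ExcVal Q := by
    rw [hN, Finset.image_sdiff _ _ Q.injective,
      Finset.image_univ_of_surjective Q.surjective]
    rfl
  have hw2 : Pat2Free w N := by
    intro a ha b hb hab h1 h2
    exact hpat (Or.inr ⟨a, b, hab, hNw a ha, hNw b hb, h1, h2⟩)
  have hB : ∀ p ∈ N, w p = Q p :=
    uniqB N (Finset.univ \ ExcVal Q) w Q hwinj' hQinj' hwimg' hQimg' hNw hNQ hw2 hQ2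
  apply Equiv.ext
  intro x
  by_cases hx : x ∈ ExcPos Q
  · exact hA x hx
  · exact hB x (Finset.mem_sdiff.2 ⟨Finset.mem_univ _, hx⟩)

open Finset in
lemma climb {lam : NCP n} {Q : Equiv.Perm (Fin n)} (hQmem : Q ∈ NCP.Cset lam)
    (hQ1 : Pat1Free Q (ExcPos Q)) (hQ2 : Pat2Free Q (Finset.univ \ ExcPos Q)) :
    ∀ (k : ℕ) (w : Equiv.Perm (Fin n)), w ∈ NCP.Cset lam →
      n * n ≤ bruhatLen w + k → BruhatLE w Q := by
  intro k
  induction k with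
  | zero =>
    intro w hw hk
    by_cases hpat : HasPat w
    · obtain ⟨w', _, _, hlen⟩ := step_lemma hw hpat
      have := bruhatLen_le w'
      omega
    · rw [noPat_eq hw hQmem hQ1 hQ2 hpat]
      exact Relation.ReflTransGen.refl
  | succ k ih =>
    intro w hw hk
    by_cases hpat : HasPat w
    · obtain ⟨w', hw', hswap, hlen⟩ := step_lemma hw hpat
      exact Relation.ReflTransGen.head ⟨hswap, hlen⟩ (ih w' hw' (by omega))
    · rw [noPat_eq hw hQmem hQ1 hQ2 hpat]
      exact Relation.ReflTransGen.refl

end Stmt6Aux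

/-- `Q_λ` is the Bruhat-maximum element of the excedance class `C_λ`. -/
theorem stmt6 (n : ℕ) (lam : NCP n) (Q : Equiv.Perm (Fin n)) (hQ : NCP.IsQ lam Q) :
    Q ∈ NCP.Cset lam ∧ ∀ w ∈ NCP.Cset lam, BruhatLE w Q := by
  have hQmem : Q ∈ NCP.Cset lam := ⟨NCPAux.excVal_Q lam hQ, NCPAux.excPos_Q lam hQ⟩
  have hQ1 : Pat1Free Q (ExcPos Q) := by
    rw [NCPAux.excPos_Q lam hQ]
    exact NCPAux.Q_pat1 lam hQ
  have hQ2 : Pat2Free Q (Finset.univ \ ExcPos Q) := by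
    rw [NCPAux.excPos_Q lam hQ]
    have he : Finset.univ \ (Finset.univ \ NCP.rpos lam) = NCP.rpos lam := by
      rw [Finset.sdiff_sdiff_self_left, Finset.univ_inter]
    rw [he]
    exact NCPAux.Q_pat2 lam hQ
  exact ⟨hQmem, fun w hw =>
    climb hQmem hQ1 hQ2 (n * n) w hw (by have := bruhatLen_le w; omega)⟩
end
end

section
/- For every noncrossing partition λ of size n, T_λ ∈ C_λ, and T_λ is the Bruhat-minimum element of C_λ: T_λ ≤ w in the Bruhat order for every w ∈ C_λ. -/
open scoped Classical

noncomputable section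

open MvPolynomial

private def iot {n : ℕ} (j j' : Fin n) (x : Fin n × Fin n) : Fin n × Fin n :=
  if x.2 = j then (x.1, j')
  else if x.2 = j' ∧ x.1 < j then (x.1, j)
  else if x.1 = j ∧ j' < x.2 then (j', x.2)
  else if x.1 = j' then (j, x.2)
  else x

private lemma iot_iot {n : ℕ} (j j' : Fin n) (hjj : j < j') (x : Fin n × Fin n)
    (hx : x.1 < x.2) : iot j j' (iot j j' x) = x := by
  obtain ⟨p, q⟩ := x
  simp only at hx
  by_cases h1 : q = j
  · subst h1
    simp [iot, hx, hjj.ne']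
  · by_cases h2 : q = j' ∧ p < j
    · obtain ⟨rfl, hpj⟩ := h2
      simp [iot, hjj.ne', hpj]
    · by_cases h3 : p = j ∧ j' < q
      · obtain ⟨rfl, hq⟩ := h3
        simp [iot, hq, hq.ne', (hjj.trans hq).ne', hjj.ne', hjj]
      · by_cases h4 : p = j'
        · have hq : j' < q := h4 ▸ hx
          simp [iot, h4, hq, hq.ne', (hjj.trans hq).ne', hjj.ne', hjj, lt_irrefl]
        · simp [iot, h1, h2, h3, h4]

private lemma iot_mem {n : ℕ} (w : Equiv.Perm (Fin n)) (j j' : Fin n) (hjj : j < j')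
    (hw : w j' < w j) (x : Fin n × Fin n) (hx1 : x.1 < x.2)
    (hx2 : w (Equiv.swap j j' x.2) < w (Equiv.swap j j' x.1)) :
    (iot j j' x).1 < (iot j j' x).2 ∧ w (iot j j' x).2 < w (iot j j' x).1 := by
  obtain ⟨p, q⟩ := x
  simp only at hx1 hx2 ⊢
  by_cases h1 : q = j
  · subst h1
    rw [Equiv.swap_apply_left, Equiv.swap_apply_of_ne_of_ne hx1.ne (hx1.trans hjj).ne] at hx2
    simp only [iot, if_pos rfl]
    exact ⟨hx1.trans hjj, hx2⟩
  · by_cases h2 : q = j' ∧ p < j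
    · obtain ⟨rfl, hpj⟩ := h2
      rw [Equiv.swap_apply_right, Equiv.swap_apply_of_ne_of_ne hpj.ne hx1.ne] at hx2
      simp only [iot, if_neg hjj.ne', eq_self_iff_true, hpj, true_and, and_true, if_true]
      exact hx2
    · by_cases h3 : p = j ∧ j' < q
      · obtain ⟨rfl, hq⟩ := h3
        rw [Equiv.swap_apply_left, Equiv.swap_apply_of_ne_of_ne h1 hq.ne'] at hx2
        simp only [iot, if_neg h1,
          if_neg (fun h => hq.ne' h.1 : ¬((p, q).2 = j' ∧ (p, q).1 < p)),
          eq_self_iff_true, hq, true_and, and_true, if_true]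
        exact hx2
      · by_cases h4 : p = j'
        · subst h4
          rw [Equiv.swap_apply_right, Equiv.swap_apply_of_ne_of_ne h1 hx1.ne'] at hx2
          simp only [iot, if_neg h1,
            if_neg (fun h => hx1.ne' h.1 : ¬((p, q).2 = p ∧ (p, q).1 < j)),
            if_neg (fun h => hjj.ne' h.1 : ¬((p, q).1 = j ∧ p < (p, q).2)), if_pos rfl]
          exact ⟨hjj.trans hx1, hx2⟩
        · have hiot : iot j j' (p, q) = (p, q) := by
            simp only [iot, if_neg h1, if_neg h2, if_neg h3, if_neg h4]
          rw [hiot]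
          by_cases ha : q = j'
          · subst ha
            by_cases hpj : p = j
            · subst hpj
              rw [Equiv.swap_apply_left, Equiv.swap_apply_right] at hx2
              exact absurd hx2 hw.asymm
            · have hjp : j < p := lt_of_le_of_ne (not_lt.1 fun h => h2 ⟨rfl, h⟩) (Ne.symm hpj)
              rw [Equiv.swap_apply_right, Equiv.swap_apply_of_ne_of_ne hpj hx1.ne] at hx2
              exact ⟨hx1, hw.trans hx2⟩
          · by_cases hpj : p = j
            · subst hpj
              rw [Equiv.swap_apply_left, Equiv.swap_apply_of_ne_of_ne h1 ha] at hx2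
              exact ⟨hx1, hx2.trans hw⟩
            · rw [Equiv.swap_apply_of_ne_of_ne h1 ha,
                Equiv.swap_apply_of_ne_of_ne hpj h4] at hx2
              exact ⟨hx1, hx2⟩

private lemma bruhatLen_mul_swap_lt {n : ℕ} (w : Equiv.Perm (Fin n)) (j j' : Fin n)
    (hjj : j < j') (hw : w j' < w j) :
    bruhatLen (w * Equiv.swap j j') < bruhatLen w := by
  classical
  unfold bruhatLen
  have hfix : iot j j' (j, j') = (j, j') := by
    simp only [iot, if_neg hjj.ne', if_neg hjj.ne, eq_self_iff_true, true_and,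
      lt_self_iff_false, if_false]
  have hjjI : (j, j') ∈ Finset.univ.filter
      (fun p : Fin n × Fin n => p.1 < p.2 ∧ w p.2 < w p.1) := by
    simp only [Finset.mem_filter, Finset.mem_univ, true_and]
    exact ⟨hjj, hw⟩
  have hmem : ∀ x ∈ (Finset.univ.filter fun p : Fin n × Fin n =>
      p.1 < p.2 ∧ (w * Equiv.swap j j') p.2 < (w * Equiv.swap j j') p.1),
      iot j j' x ∈ (Finset.univ.filter fun p : Fin n × Fin n =>
        p.1 < p.2 ∧ w p.2 < w p.1).erase (j, j') := by
    intro x hx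
    rw [Finset.mem_filter] at hx
    obtain ⟨-, hx1, hx2⟩ := hx
    simp only [Equiv.Perm.mul_apply] at hx2
    have h := iot_mem w j j' hjj hw x hx1 hx2
    refine Finset.mem_erase.2 ⟨?_, Finset.mem_filter.2 ⟨Finset.mem_univ _, h.1, h.2⟩⟩
    intro hc
    have hxx : x = (j, j') := by
      have h2 := iot_iot j j' hjj x hx1
      rw [hc, hfix] at h2
      exact h2.symm
    rw [hxx] at hx2
    simp only [Equiv.swap_apply_left, Equiv.swap_apply_right] at hx2
    exact absurd hx2 hw.asymm
  have hinj : Set.InjOn (iot j j') ((Finset.univ.filter fun p : Fin n × Fin n =>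
      p.1 < p.2 ∧ (w * Equiv.swap j j') p.2 < (w * Equiv.swap j j') p.1) :
      Finset (Fin n × Fin n)) := by
    intro a ha b hb h
    rw [Finset.mem_coe, Finset.mem_filter] at ha hb
    calc a = iot j j' (iot j j' a) := (iot_iot j j' hjj a ha.2.1).symm
      _ = iot j j' (iot j j' b) := by rw [h]
      _ = b := iot_iot j j' hjj b hb.2.1
  calc (Finset.univ.filter fun p : Fin n × Fin n =>
        p.1 < p.2 ∧ (w * Equiv.swap j j') p.2 < (w * Equiv.swap j j') p.1).card
      ≤ ((Finset.univ.filter fun p : Fin n × Fin n =>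
        p.1 < p.2 ∧ w p.2 < w p.1).erase (j, j')).card :=
        Finset.card_le_card_of_injOn _ hmem hinj
    _ < (Finset.univ.filter fun p : Fin n × Fin n => p.1 < p.2 ∧ w p.2 < w p.1).card :=
        Finset.card_erase_lt_of_mem hjjI

private lemma snd_injOn {n : ℕ} (lam : NCP n) : Set.InjOn Prod.snd (↑lam.1 : Set (Fin n × Fin n)) := by
  intro p hp q hq h
  rw [Finset.mem_coe] at hp hq
  by_contra hne
  obtain ⟨hlt, hcross⟩ := lam.2
  rcases lt_trichotomy p.1 q.1 with h1 | h1 | h1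
  · exact hcross p hp q hq hne ⟨h1.le, (hlt q hq).trans_eq h.symm, h.le⟩
  · exact hne (Prod.ext h1 h)
  · exact hcross q hq p hp (Ne.symm hne) ⟨h1.le, (hlt p hp).trans_eq h, h.ge⟩

private lemma fst_injOn {n : ℕ} (lam : NCP n) : Set.InjOn Prod.fst (↑lam.1 : Set (Fin n × Fin n)) := by
  intro p hp q hq h
  rw [Finset.mem_coe] at hp hq
  by_contra hne
  obtain ⟨hlt, hcross⟩ := lam.2
  rcases lt_trichotomy p.2 q.2 with h1 | h1 | h1
  · exact hcross p hp q hq hne ⟨h.le, lt_of_le_of_lt h.ge (hlt p hp), h1.le⟩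
  · exact hne (Prod.ext h h1)
  · exact hcross q hq p hp (Ne.symm hne) ⟨h.ge, lt_of_le_of_lt h.le (hlt q hq), h1.le⟩

private lemma card_lpos_rpos {n : ℕ} (lam : NCP n) :
    (NCP.lpos lam).card = (NCP.rpos lam).card := by
  rw [NCP.lpos, NCP.rpos, Finset.card_image_of_injOn (fst_injOn lam),
    Finset.card_image_of_injOn (snd_injOn lam)]

/-- Strict counting lemma: right endpoints `≤ x` are dominated by left endpoints `< x`. -/
private lemma rpos_count_le {n : ℕ} (lam : NCP n) (x : Fin n) :
    ((NCP.rpos lam).filter (fun y => y ≤ x)).card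
      ≤ ((NCP.lpos lam).filter (fun y => y < x)).card := by
  classical
  have h1 : (NCP.rpos lam).filter (fun y => y ≤ x)
      = (lam.1.filter (fun p => p.2 ≤ x)).image Prod.snd := by
    ext y
    simp only [NCP.rpos, Finset.mem_filter, Finset.mem_image]
    constructor
    · rintro ⟨⟨p, hp, rfl⟩, hle⟩
      exact ⟨p, ⟨hp, hle⟩, rfl⟩
    · rintro ⟨p, ⟨hp, hle⟩, rfl⟩
      exact ⟨⟨p, hp, rfl⟩, hle⟩
  have hsub : Set.InjOn Prod.snd (↑(lam.1.filter (fun p => p.2 ≤ x)) : Set (Fin n × Fin n)) :=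
    (snd_injOn lam).mono (Finset.coe_subset.2 (Finset.filter_subset _ _))
  have hsub' : Set.InjOn Prod.fst (↑(lam.1.filter (fun p => p.2 ≤ x)) : Set (Fin n × Fin n)) :=
    (fst_injOn lam).mono (Finset.coe_subset.2 (Finset.filter_subset _ _))
  rw [h1, Finset.card_image_of_injOn hsub, ← Finset.card_image_of_injOn hsub']
  apply Finset.card_le_card
  intro y hy
  obtain ⟨p, hp, rfl⟩ := Finset.mem_image.1 hy
  rw [Finset.mem_filter] at hp
  rw [Finset.mem_filter]
  exact ⟨Finset.mem_image.2 ⟨p, hp.1, rfl⟩, lt_of_lt_of_le (lam.2.1 p hp.1) hp.2⟩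

private lemma rpos_count_le' {n : ℕ} (lam : NCP n) (x : Fin n) :
    ((NCP.rpos lam).filter (fun y => y ≤ x)).card
      ≤ ((NCP.lpos lam).filter (fun y => y ≤ x)).card := by
  refine (rpos_count_le lam x).trans (Finset.card_le_card ?_)
  intro y hy
  rw [Finset.mem_filter] at hy ⊢
  exact ⟨hy.1, hy.2.le⟩

private lemma compl_count_le {n : ℕ} (lam : NCP n) (x : Fin n) :
    ((Finset.univ \ NCP.lpos lam).filter (fun y => y ≤ x)).card
      ≤ ((Finset.univ \ NCP.rpos lam).filter (fun y => y ≤ x)).card := by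
  classical
  have key : ∀ s : Finset (Fin n),
      ((Finset.univ \ s).filter (fun y => y ≤ x)).card + (s.filter (fun y => y ≤ x)).card
        = (Finset.univ.filter (fun y => y ≤ x)).card := by
    intro s
    have h := Finset.card_filter_add_card_filter_not
      (s := Finset.univ.filter (fun y : Fin n => y ≤ x)) (p := fun y => y ∈ s)
    have e1 : (Finset.univ.filter (fun y : Fin n => y ≤ x)).filter (fun y => y ∈ s)
        = s.filter (fun y => y ≤ x) := by
      ext y
      simp only [Finset.mem_filter, Finset.mem_univ, true_and]
      exact and_comm
    have e2 : (Finset.univ.filter (fun y : Fin n => y ≤ x)).filter (fun y => ¬ y ∈ s)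
        = (Finset.univ \ s).filter (fun y => y ≤ x) := by
      ext y
      simp only [Finset.mem_filter, Finset.mem_univ, true_and, Finset.mem_sdiff]
      exact and_comm
    rw [e1, e2] at h
    omega
  have h1 := key (NCP.lpos lam)
  have h2 := key (NCP.rpos lam)
  have h3 := rpos_count_le' lam x
  omega

private lemma card_filter_le_eq {n : ℕ} (s t : Finset (Fin n)) (f : Fin n → Fin n)
    (hmono : ∀ a ∈ s, ∀ b ∈ s, a < b → f a < f b)
    (himg : s.image f = t) {j : Fin n} (hj : j ∈ s) :
    (t.filter (fun y => y ≤ f j)).card = (s.filter (fun y => y ≤ j)).card := by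
  classical
  have hinj : Set.InjOn f (↑s : Set (Fin n)) := by
    intro a ha b hb h
    rw [Finset.mem_coe] at ha hb
    rcases lt_trichotomy a b with hlt | he | hgt
    · exact absurd h (hmono a ha b hb hlt).ne
    · exact he
    · exact absurd h.symm (hmono b hb a ha hgt).ne
  have hset : t.filter (fun y => y ≤ f j) = (s.filter (fun y => y ≤ j)).image f := by
    ext y
    simp only [Finset.mem_filter, Finset.mem_image, ← himg]
    constructor
    · rintro ⟨⟨x, hx, rfl⟩, hle⟩
      refine ⟨x, ⟨hx, ?_⟩, rfl⟩
      by_contra hgt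
      exact absurd hle (not_le.2 (hmono j hj x hx (not_le.1 hgt)))
    · rintro ⟨x, ⟨hx, hxj⟩, rfl⟩
      refine ⟨⟨x, hx, rfl⟩, ?_⟩
      rcases eq_or_lt_of_le hxj with rfl | hlt
      · exact le_rfl
      · exact (hmono x hx j hj hlt).le
  rw [hset, Finset.card_image_of_injOn
    (hinj.mono (Finset.coe_subset.2 (Finset.filter_subset _ _)))]

private lemma eq_of_card_filter_le {n : ℕ} (t : Finset (Fin n)) {a b : Fin n}
    (ha : a ∈ t) (hb : b ∈ t)
    (h : (t.filter (fun y => y ≤ a)).card = (t.filter (fun y => y ≤ b)).card) : a = b := by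
  classical
  have key : ∀ u v : Fin n, v ∈ t → u < v →
      (t.filter (fun y => y ≤ u)).card < (t.filter (fun y => y ≤ v)).card := by
    intro u v hv huv
    apply Finset.card_lt_card
    constructor
    · intro y hy
      rw [Finset.mem_filter] at hy ⊢
      exact ⟨hy.1, hy.2.trans huv.le⟩
    · intro hcon
      have := hcon (Finset.mem_filter.2 ⟨hv, le_rfl⟩)
      rw [Finset.mem_filter] at this
      exact absurd this.2 (not_le.2 huv)
  by_contra hne
  rcases lt_or_gt_of_ne hne with hlt | hlt
  · exact absurd h (key a b hb hlt).ne
  · exact absurd h.symm (key b a ha hlt).ne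

private lemma mem_ExcPos' {n : ℕ} (w : Equiv.Perm (Fin n)) (i : Fin n) :
    i ∈ ExcPos w ↔ i ≤ w i := by
  simp [ExcPos]

private lemma mem_ExcVal' {n : ℕ} (w : Equiv.Perm (Fin n)) (a : Fin n) :
    a ∈ ExcVal w ↔ w⁻¹ a ≤ a := by
  simp only [ExcVal, Finset.mem_image]
  constructor
  · rintro ⟨i, hi, rfl⟩
    rw [mem_ExcPos'] at hi
    simpa using hi
  · intro h
    exact ⟨w⁻¹ a, (mem_ExcPos' w _).2 (by simpa using h), by simp⟩

/-- For `w ∈ C_λ` : positions and values characterizations. -/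
private lemma cset_pos {n : ℕ} (lam : NCP n) {w : Equiv.Perm (Fin n)}
    (hw : w ∈ NCP.Cset lam) : ∀ i, i ≤ w i ↔ i ∉ NCP.rpos lam := by
  intro i
  rw [← mem_ExcPos' w i, hw.2, Finset.mem_sdiff]
  simp

private lemma cset_val {n : ℕ} (lam : NCP n) {w : Equiv.Perm (Fin n)}
    (hw : w ∈ NCP.Cset lam) : ∀ i, w i ∈ NCP.lpos lam ↔ i ∈ NCP.rpos lam := by
  intro i
  have h : w i ∈ ExcVal w ↔ i ≤ w i := by
    rw [mem_ExcVal' w (w i)]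
    simp
  rw [hw.1, Finset.mem_sdiff] at h
  simp only [Finset.mem_univ, true_and] at h
  have h2 := cset_pos lam hw i
  constructor
  · intro hl
    by_contra hr
    exact (h.2 (h2.2 hr)) hl
  · intro hr
    by_contra hl
    exact (h2.1 (h.1 hl)) hr

private lemma img_rpos {n : ℕ} (lam : NCP n) {w : Equiv.Perm (Fin n)}
    (hw : w ∈ NCP.Cset lam) : (NCP.rpos lam).image w = NCP.lpos lam := by
  apply Finset.eq_of_subset_of_card_le
  · intro y hy
    obtain ⟨j, hj, rfl⟩ := Finset.mem_image.1 hy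
    exact (cset_val lam hw j).2 hj
  · rw [Finset.card_image_of_injOn (w.injective.injOn)]
    exact (card_lpos_rpos lam).le

private lemma img_compl {n : ℕ} (lam : NCP n) {w : Equiv.Perm (Fin n)}
    (hw : w ∈ NCP.Cset lam) :
    (Finset.univ \ NCP.rpos lam).image w = Finset.univ \ NCP.lpos lam := by
  apply Finset.eq_of_subset_of_card_le
  · intro y hy
    obtain ⟨j, hj, rfl⟩ := Finset.mem_image.1 hy
    rw [Finset.mem_sdiff] at hj ⊢
    exact ⟨Finset.mem_univ _, fun hl => hj.2 ((cset_val lam hw j).1 hl)⟩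
  · rw [Finset.card_image_of_injOn (w.injective.injOn),
      Finset.card_sdiff_of_subset (Finset.subset_univ _), Finset.card_sdiff_of_subset (Finset.subset_univ _),
      card_lpos_rpos lam]


private lemma T_img_rpos {n : ℕ} (lam : NCP n) (T : Equiv.Perm (Fin n)) (hT : NCP.IsT lam T) :
    (NCP.rpos lam).image T = NCP.lpos lam := by
  apply Finset.eq_of_subset_of_card_le
  · intro y hy
    obtain ⟨j, hj, rfl⟩ := Finset.mem_image.1 hy
    exact (hT.1 j).1 hj
  · rw [Finset.card_image_of_injOn (T.injective.injOn)]
    exact (card_lpos_rpos lam).le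

private lemma T_img_compl {n : ℕ} (lam : NCP n) (T : Equiv.Perm (Fin n)) (hT : NCP.IsT lam T) :
    (Finset.univ \ NCP.rpos lam).image T = Finset.univ \ NCP.lpos lam := by
  apply Finset.eq_of_subset_of_card_le
  · intro y hy
    obtain ⟨j, hj, rfl⟩ := Finset.mem_image.1 hy
    rw [Finset.mem_sdiff] at hj ⊢
    exact ⟨Finset.mem_univ _, fun hl => hj.2 ((hT.1 j).2 hl)⟩
  · rw [Finset.card_image_of_injOn (T.injective.injOn),
      Finset.card_sdiff_of_subset (Finset.subset_univ _), Finset.card_sdiff_of_subset (Finset.subset_univ _),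
      card_lpos_rpos lam]

private lemma T_lt_rpos {n : ℕ} (lam : NCP n) (T : Equiv.Perm (Fin n)) (hT : NCP.IsT lam T) :
    ∀ j ∈ NCP.rpos lam, T j < j := by
  intro j hj
  by_contra hge
  rw [not_lt] at hge
  have hA := card_filter_le_eq (NCP.rpos lam) (NCP.lpos lam) T
    (fun a ha b hb hab => hT.2.1 a b ha hb hab) (T_img_rpos lam T hT) hj
  have hL := rpos_count_le lam j
  have hins : insert (T j) ((NCP.lpos lam).filter (fun y => y < j))
      ⊆ (NCP.lpos lam).filter (fun y => y ≤ T j) := by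
    intro y hy
    rcases Finset.mem_insert.1 hy with rfl | hy
    · exact Finset.mem_filter.2 ⟨(hT.1 j).1 hj, le_rfl⟩
    · rw [Finset.mem_filter] at hy ⊢
      exact ⟨hy.1, (hy.2.trans_le hge).le⟩
  have hnotmem : T j ∉ (NCP.lpos lam).filter (fun y => y < j) := by
    rw [Finset.mem_filter]
    push_neg
    intro _
    exact hge
  have hcard := Finset.card_le_card hins
  rw [Finset.card_insert_of_notMem hnotmem] at hcard
  omega

private lemma T_le_compl {n : ℕ} (lam : NCP n) (T : Equiv.Perm (Fin n)) (hT : NCP.IsT lam T) :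
    ∀ j, j ∉ NCP.rpos lam → j ≤ T j := by
  intro j hj
  by_contra hlt
  rw [not_le] at hlt
  have hjmem : j ∈ Finset.univ \ NCP.rpos lam := Finset.mem_sdiff.2 ⟨Finset.mem_univ _, hj⟩
  have hA := card_filter_le_eq (Finset.univ \ NCP.rpos lam) (Finset.univ \ NCP.lpos lam) T
    (fun a ha b hb hab =>
      hT.2.2 a b (Finset.mem_sdiff.1 ha).2 (Finset.mem_sdiff.1 hb).2 hab)
    (T_img_compl lam T hT) hjmem
  have hL := compl_count_le lam (T j)
  have hins : insert j ((Finset.univ \ NCP.rpos lam).filter (fun y => y ≤ T j))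
      ⊆ (Finset.univ \ NCP.rpos lam).filter (fun y => y ≤ j) := by
    intro y hy
    rcases Finset.mem_insert.1 hy with rfl | hy
    · exact Finset.mem_filter.2 ⟨hjmem, le_rfl⟩
    · rw [Finset.mem_filter] at hy ⊢
      exact ⟨hy.1, hy.2.trans hlt.le⟩
  have hnotmem : j ∉ (Finset.univ \ NCP.rpos lam).filter (fun y => y ≤ T j) := by
    rw [Finset.mem_filter]
    push_neg
    intro _
    exact hlt
  have hcard := Finset.card_le_card hins
  rw [Finset.card_insert_of_notMem hnotmem] at hcard
  omega

private lemma T_mem_Cset {n : ℕ} (lam : NCP n) (T : Equiv.Perm (Fin n)) (hT : NCP.IsT lam T) :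
    T ∈ NCP.Cset lam := by
  have hpos : ExcPos T = Finset.univ \ NCP.rpos lam := by
    ext i
    rw [mem_ExcPos', Finset.mem_sdiff]
    constructor
    · intro h1
      exact ⟨Finset.mem_univ i, fun hr => absurd h1 (not_le.2 (T_lt_rpos lam T hT i hr))⟩
    · intro h1
      exact T_le_compl lam T hT i h1.2
  refine ⟨?_, hpos⟩
  show (ExcPos T).image T = _
  rw [hpos, T_img_compl lam T hT]

private lemma cset_step {n : ℕ} (lam : NCP n) (T : Equiv.Perm (Fin n)) (hT : NCP.IsT lam T)
    {w : Equiv.Perm (Fin n)} (hw : w ∈ NCP.Cset lam) :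
    w = T ∨ ∃ w', w' ∈ NCP.Cset lam ∧ bruhatLen w' < bruhatLen w ∧ (w * w'⁻¹).IsSwap := by
  classical
  have hp := cset_pos lam hw
  by_cases hex : ∃ j j' : Fin n, j < j' ∧ (j ∈ NCP.rpos lam ↔ j' ∈ NCP.rpos lam) ∧ w j' < w j
  · obtain ⟨j, j', hjj, hsame, hinv⟩ := hex
    right
    have hquad : ((j ≤ w j) ∧ (j ≤ w j') ∧ (j' ≤ w j) ∧ (j' ≤ w j')) ∨
        (¬(j ≤ w j) ∧ ¬(j ≤ w j') ∧ ¬(j' ≤ w j) ∧ ¬(j' ≤ w j')) := by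
      by_cases hj : j ∈ NCP.rpos lam
      · have hj' := hsame.1 hj
        have f1 : w j < j := not_le.1 (fun h => (hp j).1 h hj)
        have f2 : w j' < j' := not_le.1 (fun h => (hp j').1 h hj')
        exact Or.inr ⟨not_le.2 f1, not_le.2 (hinv.trans f1), not_le.2 (f1.trans hjj),
          not_le.2 f2⟩
      · have hj' : j' ∉ NCP.rpos lam := fun h => hj (hsame.2 h)
        have g1 : j ≤ w j := (hp j).2 hj
        have g2 : j' ≤ w j' := (hp j').2 hj'
        exact Or.inl ⟨g1, hjj.le.trans g2, g2.trans hinv.le, g2⟩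
    have key1 : ∀ i, i ≤ (w * Equiv.swap j j') i ↔ i ≤ w i := by
      intro i
      rw [Equiv.Perm.mul_apply]
      by_cases hij : i = j
      · subst hij
        rw [Equiv.swap_apply_left]
        rcases hquad with ⟨a1, a2, _, _⟩ | ⟨a1, a2, _, _⟩
        · exact iff_of_true a2 a1
        · exact iff_of_false a2 a1
      · by_cases hij' : i = j'
        · subst hij'
          rw [Equiv.swap_apply_right]
          rcases hquad with ⟨_, _, a3, a4⟩ | ⟨_, _, a3, a4⟩
          · exact iff_of_true a3 a4
          · exact iff_of_false a3 a4
        · rw [Equiv.swap_apply_of_ne_of_ne hij hij']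
    have key2 : ∀ a, ((w * Equiv.swap j j')⁻¹) a ≤ a ↔ w⁻¹ a ≤ a := by
      intro a
      rw [mul_inv_rev, Equiv.Perm.mul_apply, Equiv.swap_inv]
      by_cases h : w⁻¹ a = j
      · have ha : a = w j := by rw [← h]; simp
        rw [h, Equiv.swap_apply_left, ha]
        rcases hquad with ⟨a1, _, a3, _⟩ | ⟨a1, _, a3, _⟩
        · exact iff_of_true a3 a1
        · exact iff_of_false a3 a1
      · by_cases h' : w⁻¹ a = j'
        · have ha : a = w j' := by rw [← h']; simp
          rw [h', Equiv.swap_apply_right, ha]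
          rcases hquad with ⟨_, a2, _, a4⟩ | ⟨_, a2, _, a4⟩
          · exact iff_of_true a2 a4
          · exact iff_of_false a2 a4
        · rw [Equiv.swap_apply_of_ne_of_ne h h']
    refine ⟨w * Equiv.swap j j', ⟨?_, ?_⟩, bruhatLen_mul_swap_lt w j j' hjj hinv, ?_⟩
    · ext a
      rw [mem_ExcVal', key2, ← mem_ExcVal' w a, hw.1]
    · ext i
      rw [mem_ExcPos', key1, ← mem_ExcPos' w i, hw.2]
    · have hswap : w * (w * Equiv.swap j j')⁻¹ = Equiv.swap (w j) (w j') := by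
        rw [mul_inv_rev, Equiv.swap_inv, ← mul_assoc, Equiv.swap_apply_apply]
      rw [hswap]
      exact ⟨w j, w j', w.injective.ne hjj.ne, rfl⟩
  · left
    push_neg at hex
    have hTC := T_mem_Cset lam T hT
    have hwmono_r : ∀ a ∈ NCP.rpos lam, ∀ b ∈ NCP.rpos lam, a < b → w a < w b :=
      fun a ha b hb hab =>
        lt_of_le_of_ne (hex a b hab ⟨fun _ => hb, fun _ => ha⟩) (w.injective.ne hab.ne)
    have hwmono_c : ∀ a ∈ Finset.univ \ NCP.rpos lam, ∀ b ∈ Finset.univ \ NCP.rpos lam,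
        a < b → w a < w b := by
      intro a ha b hb hab
      rw [Finset.mem_sdiff] at ha hb
      exact lt_of_le_of_ne
        (hex a b hab ⟨fun h => absurd h ha.2, fun h => absurd h hb.2⟩)
        (w.injective.ne hab.ne)
    apply Equiv.ext
    intro i
    by_cases hi : i ∈ NCP.rpos lam
    · have e1 := card_filter_le_eq (NCP.rpos lam) (NCP.lpos lam) w hwmono_r
        (img_rpos lam hw) hi
      have e2 := card_filter_le_eq (NCP.rpos lam) (NCP.lpos lam) T
        (fun a ha b hb hab => hT.2.1 a b ha hb hab) (img_rpos lam hTC) hi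
      exact eq_of_card_filter_le (NCP.lpos lam) ((cset_val lam hw i).2 hi)
        ((hT.1 i).1 hi) (e1.trans e2.symm)
    · have himem : i ∈ Finset.univ \ NCP.rpos lam :=
        Finset.mem_sdiff.2 ⟨Finset.mem_univ _, hi⟩
      have e1 := card_filter_le_eq (Finset.univ \ NCP.rpos lam)
        (Finset.univ \ NCP.lpos lam) w hwmono_c (img_compl lam hw) himem
      have e2 := card_filter_le_eq (Finset.univ \ NCP.rpos lam)
        (Finset.univ \ NCP.lpos lam) T
        (fun a ha b hb hab =>
          hT.2.2 a b (Finset.mem_sdiff.1 ha).2 (Finset.mem_sdiff.1 hb).2 hab)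
        (img_compl lam hTC) himem
      refine eq_of_card_filter_le (Finset.univ \ NCP.lpos lam) ?_ ?_ (e1.trans e2.symm)
      · exact Finset.mem_sdiff.2 ⟨Finset.mem_univ _, fun hl => hi ((cset_val lam hw i).1 hl)⟩
      · exact Finset.mem_sdiff.2 ⟨Finset.mem_univ _, fun hl => hi ((hT.1 i).2 hl)⟩

/-- `T_λ ∈ C_λ` and `T_λ` is the Bruhat-minimum element of `C_λ`. -/
theorem stmt7 (n : ℕ) (lam : NCP n) (T : Equiv.Perm (Fin n)) (hT : NCP.IsT lam T) :
    T ∈ NCP.Cset lam ∧ ∀ w ∈ NCP.Cset lam, BruhatLE T w := by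
  refine ⟨T_mem_Cset lam T hT, ?_⟩
  have main : ∀ N (w : Equiv.Perm (Fin n)), w ∈ NCP.Cset lam → bruhatLen w ≤ N →
      BruhatLE T w := by
    intro N
    induction N with
    | zero =>
      intro w hw hlen
      rcases cset_step lam T hT hw with rfl | ⟨w', _, hlt, _⟩
      · exact Relation.ReflTransGen.refl
      · omega
    | succ N ih =>
      intro w hw hlen
      rcases cset_step lam T hT hw with rfl | ⟨w', hw', hlt, hsw⟩
      · exact Relation.ReflTransGen.refl
      · exact (ih w' hw' (by omega)).tail ⟨hsw, hlt⟩
  intro w hw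
  exact main (bruhatLen w) w hw le_rfl
end
end

section
/- For every noncrossing partition λ of size n, the permutation T_λ is 321-avoiding: there are no indices i < j < k with T_λ(i) > T_λ(j) > T_λ(k). -/
open scoped Classical

noncomputable section

open MvPolynomial

/-- the permutation `T_λ` is `321`-avoiding. -/
theorem stmt8 (n : ℕ) (lam : NCP n) (T : Equiv.Perm (Fin n)) (hT : NCP.IsT lam T) :
    ∀ i j k : Fin n, i < j → j < k → ¬(T k < T j ∧ T j < T i) := by
  obtain ⟨-, hin, hout⟩ := hT
  intro i j k hij hjk ⟨hkj, hji⟩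
  by_cases hi : i ∈ NCP.rpos lam <;> by_cases hj : j ∈ NCP.rpos lam <;>
    by_cases hk : k ∈ NCP.rpos lam
  · exact absurd (hin i j hi hj hij) (not_lt.mpr hji.le)
  · exact absurd (hin i j hi hj hij) (not_lt.mpr hji.le)
  · exact absurd (hin i k hi hk (hij.trans hjk)) (not_lt.mpr (hkj.trans hji).le)
  · exact absurd (hout j k hj hk hjk) (not_lt.mpr hkj.le)
  · exact absurd (hin j k hj hk hjk) (not_lt.mpr hkj.le)
  · exact absurd (hout i k hi hk (hij.trans hjk)) (not_lt.mpr (hkj.trans hji).le)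
  · exact absurd (hout i j hi hj hij) (not_lt.mpr hji.le)
  · exact absurd (hout i j hi hj hij) (not_lt.mpr hji.le)
end
end
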